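/- For nonnegative integers N and positive integers k, (−1)^{k(k−1)/2}/[(2k−1)!]^k · det[ (N+3k−2−i−j)!/(N+k−1−i−j)! ]_{i,j=0,…,k−1} = Π_{j=0}^{k−1} [ j! / (j+k)! ] · Π_{j=1}^{2k−1} (N+j)^{min(j, 2k−j)}, i.e. it equals G(N+2k+1)G(N+1)G(k+1)^2 / (G(N+k+1)^2 G(2k+1)) where G is the Barnes G-function; more concretely it equals C_k · (N+1)(N+2)^2⋯(N+k)^k (N+k+1)^{k−1}⋯(N+2k−1) with C_k = 1/(1·2^2⋯(k−1)^{k−1} k^k (k+1)^{k−1}⋯(2k−1)). -/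

import Mathlib

open Finset Polynomial Matrix

namespace KS

lemma asc_fac (a c : ℕ) :
    (a.factorial : ℚ) * ∏ t ∈ Finset.range c, ((a : ℚ) + 1 + t) = ((a + c).factorial : ℚ) := by
  induction c with
  | zero => simp
  | succ c ih =>
    rw [Finset.prod_range_succ, ← mul_assoc, ih, show a + (c+1) = (a+c)+1 from rfl,
      Nat.factorial_succ]
    push_cast
    ring

lemma prod_desc (p : ℕ) : ∏ q ∈ Finset.range p, ((p:ℚ) - q) = p.factorial := by
  rw [← Finset.prod_range_reflect, ← Finset.prod_range_add_one_eq_factorial p]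
  push_cast
  apply Finset.prod_congr rfl
  intro q hq
  have hq' : q < p := Finset.mem_range.mp hq
  have h1 : (p - 1 - q : ℕ) = p - (q+1) := by omega
  rw [h1, Nat.cast_sub (by omega : q + 1 ≤ p)]
  push_cast
  ring

lemma prod_add_one (p : ℕ) : ∏ t ∈ Finset.range p, ((t:ℚ) + 1) = p.factorial := by
  rw [← Finset.prod_range_add_one_eq_factorial p]
  push_cast
  rfl

lemma prod_fin_Ioi (m : ℕ) (g : ℕ → ℕ → ℚ) :
    ∏ i : Fin m, ∏ j ∈ Finset.Ioi i, g (i : ℕ) (j : ℕ)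
      = ∏ i ∈ Finset.range m, ∏ t ∈ Finset.range (m - (i+1)), g i (i+1+t) := by
  rw [← Fin.prod_univ_eq_prod_range (fun i => ∏ t ∈ Finset.range (m - (i+1)), g i (i+1+t)) m]
  apply Finset.prod_congr rfl
  intro i _
  calc ∏ j ∈ Finset.Ioi i, g (i : ℕ) (j : ℕ)
      = ∏ j ∈ (Finset.Ioi i).map Fin.valEmbedding, g (i : ℕ) j := by
        rw [Finset.prod_map]; rfl
    _ = ∏ j ∈ Finset.Ioc (i : ℕ) (m - 1), g (i : ℕ) j := by
        rw [Fin.map_valEmbedding_Ioi]; congr 1; ext a; simp only [Finset.mem_Ioo, Finset.mem_Ioc]; omega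
    _ = ∏ j ∈ Finset.Ico ((i : ℕ)+1) m, g (i : ℕ) j := by
        congr 1
        have him := i.isLt
        ext a
        simp only [Finset.mem_Ioc, Finset.mem_Ico]
        omega
    _ = ∏ t ∈ Finset.range (m - ((i:ℕ)+1)), g (i:ℕ) ((i:ℕ)+1+t) := by
        rw [Finset.prod_Ico_eq_prod_range]

/-- The column polynomials. -/
noncomputable def P (n j : ℕ) : ℚ[X] :=
  (∏ t ∈ Finset.range j, (X - C ((t:ℚ)+1))) * ∏ t ∈ Finset.range (n - j), (X + C ((n:ℚ)+1+t))

lemma P_natDegree_le (n j : ℕ) (hj : j ≤ n) : (P n j).natDegree < n + 1 := by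
  have hd1 : (∏ t ∈ Finset.range j, (X - C ((t:ℚ)+1))).natDegree ≤ j := by
    refine (Polynomial.natDegree_prod_le _ _).trans ?_
    have h := Finset.sum_le_sum (s := Finset.range j) (g := fun _ => 1)
      (fun t _ => (natDegree_X_sub_C ((t:ℚ)+1)).le)
    simpa using h
  have hd2 : (∏ t ∈ Finset.range (n-j), (X + C ((n:ℚ)+1+t))).natDegree ≤ n - j := by
    refine (Polynomial.natDegree_prod_le _ _).trans ?_
    have h := Finset.sum_le_sum (s := Finset.range (n-j)) (g := fun _ => 1)
      (fun t _ => (natDegree_X_add_C ((n:ℚ)+1+(t:ℚ))).le)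
    simpa using h
  calc (P n j).natDegree ≤ _ + _ := natDegree_mul_le
    _ < n + 1 := by omega

lemma P_eval (n j : ℕ) (w : ℚ) :
    (P n j).eval w = (∏ t ∈ Finset.range j, (w - ((t:ℚ)+1))) *
      ∏ t ∈ Finset.range (n - j), (w + ((n:ℚ)+1+t)) := by
  simp [P, eval_prod]

/-- Coefficient matrix of the `P n j`. -/
noncomputable def Cmat (n : ℕ) : Matrix (Fin (n+1)) (Fin (n+1)) ℚ :=
  Matrix.of fun d j => (P n (j : ℕ)).coeff d

lemma det_eval (n : ℕ) (v : Fin (n+1) → ℚ) :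
    Matrix.det (Matrix.of fun i j : Fin (n+1) => (P n (j:ℕ)).eval (v i))
      = Matrix.det (Matrix.vandermonde v) * Matrix.det (Cmat n) := by
  rw [← Matrix.det_mul]
  congr 1
  ext i j
  rw [Matrix.mul_apply]
  simp only [Matrix.vandermonde_apply, Cmat, Matrix.of_apply]
  rw [Polynomial.eval_eq_sum_range' (P_natDegree_le n j (by omega : (j:ℕ) ≤ n)) (v i)]
  rw [Finset.sum_range fun d => (P n (j:ℕ)).coeff d * v i ^ d]
  exact Finset.sum_congr rfl fun d _ => (mul_comm _ _)

lemma detT (n : ℕ) :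
    Matrix.det (Matrix.of fun i j : Fin (n+1) => (P n (j:ℕ)).eval ((i:ℚ)+1))
      = ∏ i ∈ Finset.range (n+1),
          ((i.factorial : ℚ) * (((2*n+1).factorial : ℚ) / (((n+1+i).factorial : ℚ)))) := by
  have ht : (Matrix.of fun i j : Fin (n+1) =>
      (P n (j:ℕ)).eval ((i:ℚ)+1)).BlockTriangular OrderDual.toDual := by
    intro i j hij
    have hij' : (i:ℕ) < (j:ℕ) := hij
    simp only [Matrix.of_apply, P_eval]
    apply mul_eq_zero_of_left
    apply Finset.prod_eq_zero (Finset.mem_range.mpr hij')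
    ring
  rw [Matrix.det_of_lowerTriangular _ ht, ← Fin.prod_univ_eq_prod_range]
  apply Finset.prod_congr rfl
  intro i _
  simp only [Matrix.of_apply, P_eval]
  have h1 : ∏ t ∈ Finset.range (i:ℕ), ((i:ℚ) + 1 - ((t:ℚ)+1)) = ((i:ℕ).factorial : ℚ) := by
    rw [← prod_desc (i:ℕ)]
    apply Finset.prod_congr rfl
    intros; ring
  have h2 : ∏ t ∈ Finset.range (n - (i:ℕ)), ((i:ℚ) + 1 + ((n:ℚ)+1+t))
      = ((2*n+1).factorial : ℚ) / (((n+1+(i:ℕ)).factorial : ℚ)) := by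
    have key : ∏ t ∈ Finset.range (n-(i:ℕ)), ((i:ℚ)+1+((n:ℚ)+1+t))
        = ∏ t ∈ Finset.range (n-(i:ℕ)), ((((n+1+(i:ℕ) : ℕ)):ℚ) + 1 + t) :=
      Finset.prod_congr rfl (by intros; push_cast; ring)
    have h3 := asc_fac (n+1+(i:ℕ)) (n-(i:ℕ))
    rw [show n+1+(i:ℕ)+(n-(i:ℕ)) = 2*n+1 by omega] at h3
    rw [key, eq_div_iff (Nat.cast_ne_zero.mpr (Nat.factorial_ne_zero _)), mul_comm]
    exact h3
  rw [h1, h2]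

lemma det_vdm_z (n : ℕ) :
    Matrix.det (Matrix.vandermonde (fun i : Fin (n+1) => (i:ℚ)+1))
      = ∏ i ∈ Finset.range (n+1), ((i.factorial : ℚ)) := by
  rw [Matrix.det_vandermonde]
  have step : ∀ i : Fin (n+1), ∀ j ∈ Finset.Ioi i,
      ((j:ℚ)+1) - ((i:ℚ)+1) = ((fun a b : ℕ => ((b:ℚ) - a)) (i:ℕ) (j:ℕ)) := by
    intros; push_cast; ring
  rw [Finset.prod_congr rfl fun i _ => Finset.prod_congr rfl (step i)]
  rw [prod_fin_Ioi (n+1) (fun a b => ((b:ℚ) - a))]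
  rw [show ∏ i ∈ Finset.range (n+1), ((i.factorial : ℚ))
      = ∏ i ∈ Finset.range (n+1), (((n+1-1-i).factorial : ℚ)) from
    (Finset.prod_range_reflect (fun i => ((i.factorial : ℚ))) (n+1)).symm]
  apply Finset.prod_congr rfl
  intro i hi
  have hi' : i < n + 1 := Finset.mem_range.mp hi
  rw [show n+1-1-i = n-i by omega, show n+1-(i+1) = n-i by omega, ← prod_add_one (n-i)]
  apply Finset.prod_congr rfl
  intros; push_cast; ring

lemma det_vdm_y (n : ℕ) (x : ℚ) :
    Matrix.det (Matrix.vandermonde (fun i : Fin (n+1) => x + ((n:ℚ)+1) - (i:ℕ)))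
      = (-1)^((n+1)*n/2) * ∏ i ∈ Finset.range (n+1), ((i.factorial : ℚ)) := by
  rw [Matrix.det_vandermonde]
  have step : ∀ i : Fin (n+1), ∀ j ∈ Finset.Ioi i,
      (x + ((n:ℚ)+1) - ((j:ℕ):ℚ)) - (x + ((n:ℚ)+1) - ((i:ℕ):ℚ))
        = ((fun a b : ℕ => ((a:ℚ) - b)) (i:ℕ) (j:ℕ)) := by
    intros; push_cast; ring
  rw [Finset.prod_congr rfl fun i _ => Finset.prod_congr rfl (step i)]
  rw [prod_fin_Ioi (n+1) (fun a b => ((a:ℚ) - b))]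
  have inner : ∀ i ∈ Finset.range (n+1),
      ∏ t ∈ Finset.range (n+1-(i+1)), ((i:ℚ) - ((i+1+t : ℕ):ℚ))
        = (-1)^(n-i) * ((n-i).factorial : ℚ) := by
    intro i hi
    rw [show n+1-(i+1) = n-i by omega]
    calc ∏ t ∈ Finset.range (n-i), ((i:ℚ) - ((i+1+t : ℕ):ℚ))
        = ∏ t ∈ Finset.range (n-i), ((-1) * ((t:ℚ)+1)) := by
          apply Finset.prod_congr rfl; intros; push_cast; ring
      _ = (-1 : ℚ)^(n-i) * ((n-i).factorial : ℚ) := by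
          rw [Finset.prod_mul_distrib, Finset.prod_const, Finset.card_range, prod_add_one]
  rw [Finset.prod_congr rfl inner]
  rw [show (∏ i ∈ Finset.range (n+1), ((-1 : ℚ)^(n-i) * ((n-i).factorial : ℚ)))
      = ∏ i ∈ Finset.range (n+1), ((-1 : ℚ)^(n+1-1-i) * ((n+1-1-i).factorial : ℚ)) from
    Finset.prod_congr rfl (by intro i hi; norm_num)]
  rw [Finset.prod_range_reflect (fun i => ((-1 : ℚ)^i * ((i).factorial : ℚ))) (n+1)]
  rw [Finset.prod_mul_distrib, Finset.prod_pow_eq_pow_sum, Finset.sum_range_id]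
  norm_num

lemma Qprod_aux (n : ℕ) (x : ℚ) :
    ∏ i ∈ Finset.range (n+1), ∏ t ∈ Finset.range (n+1), (x + ((n:ℚ)+1) - (i:ℕ) + t)
      = ∏ s ∈ Finset.Icc 1 (2*n+1), (x + (s:ℚ)) ^ (min s (2*(n+1)-s)) := by
  have step1 : ∀ i ∈ Finset.range (n+1),
      ∏ t ∈ Finset.range (n+1), (x + ((n:ℚ)+1) - (i:ℕ) + t)
        = ∏ s ∈ (Finset.Icc 1 (2*n+1)).filter (fun s => n+1-i ≤ s ∧ s < 2*n+2-i),
            (x + (s:ℚ)) := by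
    intro i hi
    have hi' : i ≤ n := by have := Finset.mem_range.mp hi; omega
    have hset : (Finset.Icc 1 (2*n+1)).filter (fun s => n+1-i ≤ s ∧ s < 2*n+2-i)
        = Finset.Ico (n+1-i) (2*n+2-i) := by
      ext a
      simp only [Finset.mem_filter, Finset.mem_Icc, Finset.mem_Ico]
      omega
    rw [hset, Finset.prod_Ico_eq_prod_range]
    rw [show 2*n+2-i - (n+1-i) = n+1 by omega]
    apply Finset.prod_congr rfl
    intro t _
    rw [Nat.cast_add, Nat.cast_sub (by omega : i ≤ n+1)]
    push_cast
    ring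
  rw [Finset.prod_congr rfl step1]
  rw [Finset.prod_comm' (t' := Finset.Icc 1 (2*n+1))
    (s' := fun s => (Finset.range (n+1)).filter (fun i => n+1-i ≤ s ∧ s < 2*n+2-i)) (by
    intro i s
    simp only [Finset.mem_filter, Finset.mem_range, Finset.mem_Icc]
    omega)]
  apply Finset.prod_congr rfl
  intro s hs
  have hs' : 1 ≤ s ∧ s ≤ 2*n+1 := Finset.mem_Icc.mp hs
  rw [Finset.prod_const]
  congr 1
  have hset2 : (Finset.range (n+1)).filter (fun i => n+1-i ≤ s ∧ s < 2*n+2-i)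
      = Finset.Ico (n+1-s) (min (n+1) (2*n+2-s)) := by
    ext a
    simp only [Finset.mem_filter, Finset.mem_range, Finset.mem_Ico, lt_min_iff]
    omega
  rw [hset2, Nat.card_Ico]
  omega

lemma Qprod (n : ℕ) (x : ℚ) :
    ∏ i : Fin (n+1), ∏ t ∈ Finset.range (n+1), (x + ((n:ℚ)+1) - (i:ℕ) + t)
      = ∏ s ∈ Finset.Icc 1 (2*n+1), (x + (s:ℚ)) ^ (min s (2*(n+1)-s)) := by
  rw [← Qprod_aux n x]
  exact Fin.prod_univ_eq_prod_range
    (fun i => ∏ t ∈ Finset.range (n+1), (x + ((n:ℚ)+1) - (i:ℚ) + t)) (n+1)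

lemma entry (n j : ℕ) (hj : j ≤ n) (w : ℚ) :
    ∏ m ∈ Finset.range (2*n+1), (w - (j:ℚ) + m)
      = (∏ t ∈ Finset.range (n+1), (w + (t:ℚ))) * (P n j).eval w := by
  rw [P_eval]
  rw [show 2*n+1 = j + ((n+1) + (n-j)) by omega, Finset.prod_range_add, Finset.prod_range_add]
  have hA : ∏ m ∈ Finset.range j, (w - (j:ℚ) + m)
      = ∏ t ∈ Finset.range j, (w - ((t:ℚ)+1)) := by
    rw [← Finset.prod_range_reflect (fun m => w - (j:ℚ) + m) j]
    apply Finset.prod_congr rfl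
    intro m hm
    have hm' : m < j := Finset.mem_range.mp hm
    rw [Nat.cast_sub (by omega : m ≤ j - 1), Nat.cast_sub (by omega : 1 ≤ j)]
    push_cast
    ring
  have hB : ∏ m ∈ Finset.range (n+1), (w - (j:ℚ) + ((j + m : ℕ):ℚ))
      = ∏ t ∈ Finset.range (n+1), (w + (t:ℚ)) := by
    apply Finset.prod_congr rfl
    intros; push_cast; ring
  have hC : ∏ m ∈ Finset.range (n-j), (w - (j:ℚ) + ((j + ((n+1) + m) : ℕ):ℚ))
      = ∏ t ∈ Finset.range (n-j), (w + ((n:ℚ)+1+t)) := by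
    apply Finset.prod_congr rfl
    intros; push_cast; ring
  rw [hA, hB, hC]
  ring

end KS

/-- The Keating–Snaith formula: for a nonnegative integer `N` and positive integer `k`,
`(−1)^{k(k−1)/2}/[(2k−1)!]^k · det[(N+3k−2−i−j)!/(N+k−1−i−j)!]_{i,j=0,…,k−1}
  = Π_{j=0}^{k−1} [j!/(j+k)!] · Π_{j=1}^{2k−1} (N+j)^{min(j,2k−j)}`,
where each entry is the product of the `2k−1` consecutive integers starting from `N+k−i−j`.
The right-hand side equals `G(N+2k+1)G(N+1)G(k+1)²/(G(N+k+1)²G(2k+1))`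
with `G` the Barnes G-function. -/
theorem keating_snaith_det (N k : ℕ) (hk : 0 < k) :
    ((-1 : ℚ)) ^ (k * (k - 1) / 2) / (((2 * k - 1).factorial : ℚ)) ^ k *
      Matrix.det (fun i j : Fin k =>
        ∏ m ∈ Finset.range (2 * k - 1), ((N : ℚ) + (k : ℚ) - (i : ℕ) - (j : ℕ) + m)) =
    (∏ j ∈ Finset.range k, ((j.factorial : ℚ) / ((j + k).factorial : ℚ))) *
      ∏ j ∈ Finset.Icc 1 (2 * k - 1), ((N : ℚ) + (j : ℚ)) ^ (min j (2 * k - j)) := by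
  obtain ⟨n, rfl⟩ : ∃ n, k = n + 1 := ⟨k - 1, by omega⟩
  simp only [show 2*(n+1)-1 = 2*n+1 by omega, Nat.add_sub_cancel]
  set x : ℚ := (N : ℚ) with hx
  set w : Fin (n+1) → ℚ := fun i => x + ((n:ℚ)+1) - (i:ℕ) with hw
  have hM : (fun i j : Fin (n+1) =>
        ∏ m ∈ Finset.range (2*n+1), (x + ((n+1 : ℕ):ℚ) - (i:ℕ) - (j:ℕ) + m))
      = Matrix.of (fun i j : Fin (n+1) =>
          (∏ t ∈ Finset.range (n+1), (w i + (t:ℚ))) * (KS.P n (j:ℕ)).eval (w i)) := by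
    ext i j
    simp only [Matrix.of_apply]
    rw [← KS.entry n (j:ℕ) (by omega) (w i)]
    apply Finset.prod_congr rfl
    intros
    simp only [hw]
    push_cast
    ring
  rw [hM]
  rw [show (Matrix.of (fun i j : Fin (n+1) =>
      (∏ t ∈ Finset.range (n+1), (w i + (t:ℚ))) * (KS.P n (j:ℕ)).eval (w i)))
    = Matrix.of (fun i j : Fin (n+1) => (fun i' : Fin (n+1) =>
        ∏ t ∈ Finset.range (n+1), (w i' + (t:ℚ))) i *
        (Matrix.of fun i' j' : Fin (n+1) => (KS.P n (j':ℕ)).eval (w i')) i j) from rfl]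
  rw [Matrix.det_mul_column, KS.det_eval n w]
  have hQ := KS.Qprod n x
  have hV := KS.det_vdm_y n x
  have hz : (∏ i ∈ Finset.range (n+1), ((i.factorial : ℚ))) * Matrix.det (KS.Cmat n)
      = ∏ i ∈ Finset.range (n+1),
          ((i.factorial : ℚ) * (((2*n+1).factorial : ℚ) / (((n+1+i).factorial : ℚ)))) := by
    rw [← KS.det_vdm_z n, ← KS.detT n, KS.det_eval n (fun i => (i:ℚ)+1)]
  simp only [hw]
  rw [hQ, hV]
  have hRAC : (∏ i ∈ Finset.range (n+1),
        ((i.factorial : ℚ) * (((2*n+1).factorial : ℚ) / (((n+1+i).factorial : ℚ)))))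
      = ((2*n+1).factorial : ℚ)^(n+1) *
        ∏ j ∈ Finset.range (n+1), ((j.factorial : ℚ) / (((j+(n+1)).factorial : ℚ))) := by
    rw [Finset.prod_congr rfl (fun i _ => show (i.factorial:ℚ) *
        (((2*n+1).factorial : ℚ)/(((n+1+i).factorial : ℚ)))
        = ((2*n+1).factorial : ℚ) * ((i.factorial:ℚ)/(((i+(n+1)).factorial : ℚ))) by
      rw [show n+1+i = i+(n+1) by ring]; ring)]
    rw [Finset.prod_mul_distrib, Finset.prod_const, Finset.card_range]
  have key := hz.trans hRAC
  set e := (n+1)*n/2 with he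
  have hε : ((-1:ℚ))^e * ((-1:ℚ))^e = 1 := by
    rw [← pow_add]
    exact Even.neg_one_pow ⟨e, by ring⟩
  set S := ∏ i ∈ Finset.range (n+1), ((i.factorial : ℚ)) with hS
  set D := (KS.Cmat n).det with hD
  set F := ((2*n+1).factorial : ℚ) with hF
  set RC := ∏ j ∈ Finset.range (n+1), ((j.factorial : ℚ) / (((j+(n+1)).factorial : ℚ))) with hRC
  set PR := ∏ s ∈ Finset.Icc 1 (2*n+1), (x + (s:ℚ)) ^ (min s (2*(n+1)-s)) with hPR
  have hFne : F^(n+1) ≠ 0 :=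
    pow_ne_zero _ (Nat.cast_ne_zero.mpr (Nat.factorial_ne_zero _))
  rw [div_mul_eq_mul_div, div_eq_iff hFne]
  linear_combination (((-1:ℚ))^e * ((-1:ℚ))^e * PR) * key + (PR * RC * F^(n+1)) * hε
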